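/- Let λ: Z_+ → [0,∞) be a nonincreasing bounded sequence. Define f: (0,1) → R by f(x) = (1-x) ∑_{n=0}^∞ λ(n) x^n. Then f is nonincreasing on (0,1); in particular, its derivative f'(x) = ∑_{n=0}^∞ (n+1)(λ(n+1) - λ(n)) x^n ≤ 0 for all x ∈ (0,1). -/

import Mathlib

open Finset

section aux
variable (lam : ℕ → ℝ)

lemma aux_sum_d (hnn : ∀ n, 0 ≤ lam n) (hanti : Antitone lam) :
    Summable (fun n => lam n - lam (n + 1)) := by
  apply summable_of_sum_range_le (c := lam 0)
  · intro n; linarith [hanti (Nat.le_succ n)]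
  · intro n
    have : ∑ i ∈ Finset.range n, (lam i - lam (i + 1)) = lam 0 - lam n :=
      Finset.sum_range_sub' lam n
    rw [this]; linarith [hnn n]

lemma aux_sum_lam (hnn : ∀ n, 0 ≤ lam n) (hbdd : ∃ C : ℝ, ∀ n, lam n ≤ C)
    {x : ℝ} (hx : |x| < 1) : Summable (fun n => lam n * x ^ n) := by
  obtain ⟨C, hC⟩ := hbdd
  have hC0 : 0 ≤ C := (hnn 0).trans (hC 0)
  apply Summable.of_norm_bounded
    ((summable_geometric_of_lt_one (abs_nonneg x) hx).mul_left C)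
  intro n
  rw [norm_mul, norm_pow, Real.norm_eq_abs, Real.norm_eq_abs, abs_of_nonneg (hnn n)]
  exact mul_le_mul_of_nonneg_right (hC n) (pow_nonneg (abs_nonneg x) n)

lemma aux_eq (hnn : ∀ n, 0 ≤ lam n) (hanti : Antitone lam) (hbdd : ∃ C : ℝ, ∀ n, lam n ≤ C)
    {x : ℝ} (hx : x ∈ Set.Ioo (-1 : ℝ) 1) :
    (1 - x) * ∑' n : ℕ, lam n * x ^ n
      = lam 0 + ∑' n : ℕ, (lam (n + 1) - lam n) * x ^ (n + 1) := by
  have hax : |x| < 1 := abs_lt.2 ⟨hx.1, hx.2⟩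
  have hG : Summable (fun n => lam n * x ^ n) := aux_sum_lam lam hnn hbdd hax
  have hG1 : Summable (fun n => lam (n + 1) * x ^ (n + 1)) :=
    (summable_nat_add_iff 1).2 hG
  have hG2 : Summable (fun n => lam n * x ^ (n + 1)) := by
    have := hG.mul_left x
    exact this.congr (fun n => by ring)
  have hsplit : ∑' n : ℕ, lam n * x ^ n = lam 0 + ∑' n : ℕ, lam (n + 1) * x ^ (n + 1) := by
    rw [hG.tsum_eq_zero_add]; simp
  have hxG : x * ∑' n : ℕ, lam n * x ^ n = ∑' n : ℕ, lam n * x ^ (n + 1) := by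
    rw [← tsum_mul_left]; exact tsum_congr (fun n => by ring)
  have : (1 - x) * ∑' n : ℕ, lam n * x ^ n
      = (∑' n : ℕ, lam n * x ^ n) - x * ∑' n : ℕ, lam n * x ^ n := by ring
  rw [this, hxG, hsplit, add_sub_assoc, ← hG1.tsum_sub hG2]
  congr 1
  exact tsum_congr (fun n => by ring)

end aux

theorem stmt_10 (lam : ℕ → ℝ) (hnn : ∀ n, 0 ≤ lam n) (hanti : Antitone lam)
    (hbdd : ∃ C : ℝ, ∀ n, lam n ≤ C) :
    AntitoneOn (fun x : ℝ => (1 - x) * ∑' n : ℕ, lam n * x ^ n) (Set.Ioo 0 1) ∧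
    ∀ x ∈ Set.Ioo (0 : ℝ) 1,
      HasDerivAt (fun x : ℝ => (1 - x) * ∑' n : ℕ, lam n * x ^ n)
        (∑' n : ℕ, (n + 1 : ℝ) * (lam (n + 1) - lam n) * x ^ n) x ∧
      (∑' n : ℕ, (n + 1 : ℝ) * (lam (n + 1) - lam n) * x ^ n) ≤ 0 := by
  set f : ℝ → ℝ := fun x => (1 - x) * ∑' n : ℕ, lam n * x ^ n with hf
  have key : ∀ x ∈ Set.Ioo (0 : ℝ) 1,
      HasDerivAt f (∑' n : ℕ, (n + 1 : ℝ) * (lam (n + 1) - lam n) * x ^ n) x := by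
    intro x hx
    set r : ℝ := (1 + x) / 2 with hr
    have hr0 : 0 < r := by simp [hr]; linarith [hx.1]
    have hr1 : r < 1 := by simp [hr]; linarith [hx.2]
    have hxr : |x| < r := by
      rw [abs_of_pos hx.1]; simp [hr]; linarith [hx.2]
    -- differentiate h(y) = lam 0 + ∑ (lam(n+1)-lam n) y^(n+1)
    have hdlt : ∀ n : ℕ, |lam (n + 1) - lam n| ≤ lam 0 := by
      intro n
      rw [abs_sub_comm, abs_of_nonneg (by linarith [hanti (Nat.le_succ n)])]
      linarith [hanti (Nat.zero_le n), hnn (n + 1)]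
    have hsu : Summable (fun n : ℕ => lam 0 * (((n : ℝ) + 1) * r ^ n)) := by
      apply Summable.mul_left
      have h1 := summable_pow_mul_geometric_of_norm_lt_one 1
        (by rw [Real.norm_eq_abs, abs_of_pos hr0]; exact hr1 : ‖r‖ < 1)
      have h2 : Summable (fun n : ℕ => r ^ n) := summable_geometric_of_lt_one hr0.le hr1
      exact (h1.add h2).congr (fun n => by push_cast; ring)
    have hsum0 : Summable (fun n : ℕ => (lam (n + 1) - lam n) * x ^ (n + 1)) := by
      apply Summable.of_norm_bounded (hsu)
      intro n
      rw [norm_mul, norm_pow, Real.norm_eq_abs, Real.norm_eq_abs]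
      calc |lam (n + 1) - lam n| * |x| ^ (n + 1)
          ≤ lam 0 * r ^ (n + 1) := by
            apply mul_le_mul (hdlt n) (pow_le_pow_left₀ (abs_nonneg x) hxr.le _)
              (pow_nonneg (abs_nonneg x) _) (hnn 0)
        _ ≤ lam 0 * (((n : ℝ) + 1) * r ^ n) := by
            rw [pow_succ]
            apply mul_le_mul_of_nonneg_left _ (hnn 0)
            rw [mul_comm (r ^ n) r]
            apply mul_le_mul_of_nonneg_right _ (pow_nonneg hr0.le n)
            linarith [hr1, (by positivity : (0:ℝ) ≤ (n:ℝ))]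
    have hderivh : HasDerivAt (fun y : ℝ => lam 0 + ∑' n : ℕ, (lam (n + 1) - lam n) * y ^ (n + 1))
        (∑' n : ℕ, (lam (n + 1) - lam n) * (((n : ℝ) + 1) * x ^ n)) x := by
      apply HasDerivAt.const_add
      apply hasDerivAt_tsum_of_isPreconnected hsu (Metric.isOpen_ball (x := (0:ℝ)) (ε := r))
        ((convex_ball (0:ℝ) r).isPreconnected) (y₀ := x)
        (g' := fun n y => (lam (n + 1) - lam n) * (((n : ℝ) + 1) * y ^ n))
      · intro n y hy
        have := (hasDerivAt_pow (n + 1) y).const_mul (lam (n + 1) - lam n)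
        exact this.congr_deriv (by push_cast; simp)
      · intro n y hy
        rw [Real.norm_eq_abs, abs_mul, abs_mul]
        have hyr : |y| < r := by simpa [Real.dist_eq] using hy
        have : |((n:ℝ)+1)| = (n:ℝ)+1 := abs_of_nonneg (by positivity)
        rw [this, abs_pow]
        exact mul_le_mul (hdlt n)
          (mul_le_mul_of_nonneg_left (pow_le_pow_left₀ (abs_nonneg y) hyr.le n)
            (by positivity)) (by positivity) (hnn 0)
      · simpa [Real.dist_eq, abs_of_pos hx.1] using hxr
      · exact hsum0
      · simpa [Real.dist_eq, abs_of_pos hx.1] using hxr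
    have hEq : f =ᶠ[nhds x] (fun y : ℝ => lam 0 + ∑' n : ℕ, (lam (n + 1) - lam n) * y ^ (n + 1)) := by
      have hmem : Set.Ioo (-1 : ℝ) 1 ∈ nhds x :=
        isOpen_Ioo.mem_nhds ⟨by linarith [hx.1], hx.2⟩
      filter_upwards [hmem] with y hy
      exact aux_eq lam hnn hanti hbdd hy
    have := (hderivh.congr_of_eventuallyEq hEq)
    exact this.congr_deriv (tsum_congr (fun n => by ring))
  have hnp : ∀ x ∈ Set.Ioo (0 : ℝ) 1,
      (∑' n : ℕ, (n + 1 : ℝ) * (lam (n + 1) - lam n) * x ^ n) ≤ 0 := by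
    intro x hx
    apply tsum_nonpos
    intro n
    apply mul_nonpos_of_nonpos_of_nonneg _ (pow_nonneg hx.1.le n)
    apply mul_nonpos_of_nonneg_of_nonpos (by positivity)
    linarith [hanti (Nat.le_succ n)]
  refine ⟨?_, fun x hx => ⟨key x hx, hnp x hx⟩⟩
  apply antitoneOn_of_deriv_nonpos (convex_Ioo 0 1)
  · intro x hx
    exact ((key x hx).differentiableAt).continuousAt.continuousWithinAt
  · intro x hx
    rw [interior_Ioo] at hx
    exact ((key x hx).differentiableAt).differentiableWithinAt
  · intro x hx
    rw [interior_Ioo] at hx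
    rw [(key x hx).deriv]
    exact hnp x hx
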